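/- Let A ∈ ℂ^{N×N} be Hermitian positive semidefinite, x ∈ ℂ^N, c > 0, and ξ > 0. Define Q = (A + c x x^H + ξ I)^{-1} and Q' = (A + ξ I)^{-1}. Then for any matrix B ∈ ℂ^{N×N}, |tr(B(Q − Q'))| ≤ ‖B‖₂ / ξ, where ‖B‖₂ is the spectral norm. -/

import Mathlib

open Matrix
open scoped ComplexOrder

private lemma vecMulVec_mulVec' {N : ℕ} (x w : Fin N → ℂ) :
    vecMulVec x (star x) *ᵥ w = (star x ⬝ᵥ w) • x := by
  ext i
  simp only [Matrix.mulVec, dotProduct, vecMulVec_apply, Pi.smul_apply, smul_eq_mul,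
    Pi.star_apply, Finset.sum_mul]
  exact Finset.sum_congr rfl fun j _ => by ring

private lemma trace_mul_vecMulVec {N : ℕ} (C : Matrix (Fin N) (Fin N) ℂ) (x : Fin N → ℂ) :
    (C * vecMulVec x (star x)).trace = star x ⬝ᵥ (C *ᵥ x) := by
  simp only [Matrix.trace, Matrix.diag_apply, Matrix.mul_apply, vecMulVec_apply,
    dotProduct, Matrix.mulVec, Pi.star_apply, Finset.mul_sum]
  exact Finset.sum_congr rfl fun i _ => Finset.sum_congr rfl fun j _ => by ring

/-- Rank-one perturbation lemma: a rank-one update inside a regularized resolvent changes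
the trace against any matrix `B` by at most `‖B‖₂ / ξ` (spectral norm). -/
theorem rank_one_perturbation_lemma {N : ℕ}
    (A : Matrix (Fin N) (Fin N) ℂ) (hA : A.PosSemidef)
    (x : Fin N → ℂ) (c ξ : ℝ) (hc : 0 < c) (hξ : 0 < ξ)
    (B : Matrix (Fin N) (Fin N) ℂ) :
    ‖((B * ((A + (c : ℂ) • vecMulVec x (star x) + (ξ : ℂ) • 1)⁻¹ -
          (A + (ξ : ℂ) • 1)⁻¹)).trace)‖
      ≤ ‖Matrix.toEuclideanCLM (𝕜 := ℂ) B‖ / ξ := by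
  set K := vecMulVec x (star x) with hK
  set M' := A + (c:ℂ) • K + (ξ:ℂ) • 1 with hM'def
  set M := A + (ξ:ℂ) • 1 with hMdef
  -- positivity facts
  have hξ1 : ((ξ:ℂ) • (1 : Matrix (Fin N) (Fin N) ℂ)).PosDef := by
    refine posDef_iff_dotProduct_mulVec.mpr ⟨?_, ?_⟩
    · simp [Matrix.IsHermitian, Matrix.conjTranspose_smul, Complex.star_def,
        Complex.conj_ofReal]
    · intro y hy
      have h1 : ((ξ:ℂ) • (1 : Matrix (Fin N) (Fin N) ℂ)) *ᵥ y = (ξ:ℂ) • y := by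
        rw [Matrix.smul_mulVec, Matrix.one_mulVec]
      rw [h1, dotProduct_smul, smul_eq_mul]
      have h2 : 0 < star y ⬝ᵥ y := Matrix.dotProduct_star_self_pos_iff.mpr hy
      exact mul_pos (Complex.zero_lt_real.mpr hξ) h2
  have hcK : ((c:ℂ) • K).PosSemidef := by
    refine posSemidef_iff_dotProduct_mulVec.mpr ⟨?_, ?_⟩
    · rw [Matrix.IsHermitian]
      ext i j
      simp only [Matrix.conjTranspose_apply, Matrix.smul_apply, hK, vecMulVec_apply,
        Pi.star_apply, smul_eq_mul, star_mul', star_star, Complex.star_def,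
        Complex.conj_ofReal, Complex.conj_conj]
      ring
    · intro y
      have h1 : ((c:ℂ) • K) *ᵥ y = (c:ℂ) • ((star x ⬝ᵥ y) • x) := by
        rw [Matrix.smul_mulVec, hK, vecMulVec_mulVec']
      rw [h1, dotProduct_smul, dotProduct_smul, smul_eq_mul, smul_eq_mul]
      have h2 : star y ⬝ᵥ x = star (star x ⬝ᵥ y) := by
        rw [← Matrix.star_dotProduct_star, star_star]
      rw [h2]
      exact mul_nonneg (Complex.zero_le_real.mpr hc.le)
        (mul_star_self_nonneg _)
  have hM : M.PosDef := Matrix.PosDef.posSemidef_add hA hξ1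
  have hM' : M'.PosDef := Matrix.PosDef.posSemidef_add (hA.add hcK) hξ1
  have hdet : IsUnit M.det := isUnit_iff_ne_zero.mpr hM.det_pos.ne'
  have hdet' : IsUnit M'.det := isUnit_iff_ne_zero.mpr hM'.det_pos.ne'
  set Q := M'⁻¹ with hQ
  set Q' := M⁻¹ with hQ'
  have h1 : Q * M' = 1 := Matrix.nonsing_inv_mul _ hdet'
  have h1' : M' * Q = 1 := Matrix.mul_nonsing_inv _ hdet'
  have h2 : M * Q' = 1 := Matrix.mul_nonsing_inv _ hdet
  have hQ'herm : Q'.IsHermitian := hM.isHermitian.inv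
  -- resolvent identity
  have hres : Q - Q' = -((c:ℂ) • (Q * K * Q')) := by
    have e0 : M' - M = (c:ℂ) • K := by
      rw [hM'def, hMdef]; abel
    have e1 : Q * (M' - M) * Q' = Q' - Q := by
      rw [Matrix.mul_sub, Matrix.sub_mul, h1, Matrix.one_mul, Matrix.mul_assoc, h2,
        Matrix.mul_one]
    have e2 : Q * ((c:ℂ) • K) * Q' = (c:ℂ) • (Q * K * Q') := by
      rw [Matrix.mul_smul, Matrix.smul_mul]
    rw [← e2, ← e0, e1]
    abel
  -- quantities
  set u := Q' *ᵥ x with hu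
  set α := star x ⬝ᵥ u with hα
  have hαnn : 0 ≤ α := hM.posSemidef.inv.dotProduct_mulVec_nonneg x
  obtain ⟨hare, haim⟩ : 0 ≤ α.re ∧ α.im = 0 := by
    rwa [Complex.le_def, Complex.zero_re, Complex.zero_im, eq_comm] at hαnn
  set a := α.re with ha
  have hαeq : α = (a : ℂ) := by
    rw [Complex.ext_iff]; simp [haim, ha]
  have hden : (0:ℝ) < 1 + c * a := by positivity
  have hdenC : (1 + (c:ℂ) * α) ≠ 0 := by
    rw [hαeq]
    exact_mod_cast (by push_cast; exact_mod_cast hden.ne' : ((1 + c * a : ℝ) : ℂ) ≠ 0)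
  -- Sherman-Morrison vector identity
  have hQx : Q *ᵥ x = (1 + (c:ℂ) * α)⁻¹ • u := by
    have key : M' *ᵥ u = (1 + (c:ℂ) * α) • x := by
      have : M' = M + (c:ℂ) • K := by rw [hM'def, hMdef]; abel
      rw [this, Matrix.add_mulVec, Matrix.smul_mulVec, hK, vecMulVec_mulVec',
        ← hα]
      have : M *ᵥ u = x := by
        rw [hu, Matrix.mulVec_mulVec, h2, Matrix.one_mulVec]
      rw [this, add_smul, one_smul, smul_smul]
    have : u = (1 + (c:ℂ) * α) • (Q *ᵥ x) := by
      calc u = Q *ᵥ (M' *ᵥ u) := by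
              rw [Matrix.mulVec_mulVec, h1, Matrix.one_mulVec]
        _ = (1 + (c:ℂ) * α) • (Q *ᵥ x) := by rw [key, Matrix.mulVec_smul]
    rw [this, smul_smul, inv_mul_cancel₀ hdenC, one_smul]
  -- trace computation
  set γ := star u ⬝ᵥ (B *ᵥ u) with hγ
  have hdp : ∀ w : Fin N → ℂ, star x ⬝ᵥ (Q' *ᵥ w) = star u ⬝ᵥ w := by
    intro w
    rw [hu, Matrix.star_mulVec, hQ'herm.eq, ← Matrix.dotProduct_mulVec]
  have htr : (B * (Q - Q')).trace = -((c:ℂ) * ((1 + (c:ℂ) * α)⁻¹ * γ)) := by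
    rw [hres, Matrix.mul_neg, Matrix.mul_smul, Matrix.trace_neg, Matrix.trace_smul]
    have e3 : (B * (Q * K * Q')).trace = star x ⬝ᵥ ((Q' * B * Q) *ᵥ x) := by
      calc (B * (Q * K * Q')).trace
          = ((B * Q * K) * Q').trace := by
            rw [show B * (Q * K * Q') = (B * Q * K) * Q' from by
                simp only [Matrix.mul_assoc]]
        _ = (Q' * (B * Q * K)).trace := Matrix.trace_mul_comm _ _
        _ = ((Q' * B * Q) * K).trace := by simp only [Matrix.mul_assoc]
        _ = star x ⬝ᵥ ((Q' * B * Q) *ᵥ x) := by rw [hK, trace_mul_vecMulVec]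
    have e4 : star x ⬝ᵥ ((Q' * B * Q) *ᵥ x) = (1 + (c:ℂ) * α)⁻¹ * γ := by
      rw [← Matrix.mulVec_mulVec, ← Matrix.mulVec_mulVec, hQx, Matrix.mulVec_smul,
        Matrix.mulVec_smul, dotProduct_smul, smul_eq_mul, hdp, hγ]
    rw [e3, e4, smul_eq_mul]
  -- norm bound on γ
  set nB := ‖Matrix.toEuclideanCLM (𝕜 := ℂ) B‖ with hnB
  set u' : EuclideanSpace ℂ (Fin N) := (WithLp.equiv 2 _).symm u with hu'
  have hγbound : ‖γ‖ ≤ nB * (‖u'‖ * ‖u'‖) := by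
    have : γ = inner ℂ u' (Matrix.toEuclideanCLM (𝕜 := ℂ) B u') := by
      rw [hu', hγ, EuclideanSpace.inner_eq_star_dotProduct, dotProduct_comm]; rfl
    rw [this]
    calc ‖(inner ℂ u' ((Matrix.toEuclideanCLM (𝕜 := ℂ) B) u'))‖
        = ‖(inner ℂ u' ((Matrix.toEuclideanCLM (𝕜 := ℂ) B) u') : ℂ)‖ := by
          rfl
      _ ≤ ‖u'‖ * ‖(Matrix.toEuclideanCLM (𝕜 := ℂ) B) u'‖ := norm_inner_le_norm _ _
      _ ≤ ‖u'‖ * (nB * ‖u'‖) := by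
          gcongr
          exact ContinuousLinearMap.le_opNorm _ _
      _ = nB * (‖u'‖ * ‖u'‖) := by ring
  -- bound on ‖u'‖²
  have hu'sq : ‖u'‖ * ‖u'‖ ≤ a / ξ := by
    have hQAQ : (Q' * A * Q').PosSemidef := by
      have := hA.mul_mul_conjTranspose_same Q'
      rwa [hQ'herm.eq] at this
    have hAeq : Q' * A * Q' = Q' - (ξ:ℂ) • (Q' * Q') := by
      have hA' : A = M - (ξ:ℂ) • 1 := by rw [hMdef]; abel
      rw [hA', Matrix.mul_sub, Matrix.sub_mul, Matrix.mul_assoc, h2, Matrix.mul_one,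
        Matrix.mul_smul, Matrix.smul_mul, Matrix.mul_one]
    have hpos : 0 ≤ star x ⬝ᵥ ((Q' - (ξ:ℂ) • (Q' * Q')) *ᵥ x) := by
      rw [← hAeq]; exact hQAQ.dotProduct_mulVec_nonneg x
    have hs : star x ⬝ᵥ ((Q' * Q') *ᵥ x) = star u ⬝ᵥ u := by
      rw [← Matrix.mulVec_mulVec, hdp, hu]
    have hnorm : (star u ⬝ᵥ u : ℂ) = ((‖u'‖ * ‖u'‖ : ℝ) : ℂ) := by
      have h5 : (inner ℂ u' u' : ℂ) = star u ⬝ᵥ u := by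
        rw [hu', EuclideanSpace.inner_eq_star_dotProduct, dotProduct_comm]; rfl
      have hb : (RCLike.ofReal : ℝ → ℂ) = Complex.ofReal := rfl
      rw [← h5, inner_self_eq_norm_sq_to_K, hb]
      push_cast
      ring
    rw [Matrix.sub_mulVec, dotProduct_sub, Matrix.smul_mulVec,
      dotProduct_smul, hs, hnorm, ← hα, hαeq, smul_eq_mul] at hpos
    have hre : (0:ℝ) ≤ a - ξ * (‖u'‖ * ‖u'‖) := by
      have hcast : ((a - ξ * (‖u'‖ * ‖u'‖) : ℝ) : ℂ)
          = (a : ℂ) - (ξ:ℂ) * ((‖u'‖ * ‖u'‖ : ℝ) : ℂ) := by push_cast; ring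
      rw [← hcast] at hpos
      exact Complex.zero_le_real.mp hpos
    rw [le_div_iff₀ hξ]
    linarith
  -- final computation
  have habs : ‖(B * (Q - Q')).trace‖
      = c * ((1 + c * a)⁻¹ * ‖γ‖) := by
    rw [htr, norm_neg, norm_mul, norm_mul, norm_inv]
    have e5 : ‖(c:ℂ)‖ = c := by
      rw [Complex.norm_real, Real.norm_eq_abs, abs_of_pos hc]
    have e6 : ‖1 + (c:ℂ) * α‖ = 1 + c * a := by
      rw [hαeq, show (1 + (c:ℂ) * (a:ℂ)) = ((1 + c * a : ℝ) : ℂ) by push_cast; ring,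
        Complex.norm_real, Real.norm_eq_abs, abs_of_pos hden]
    rw [e5, e6]
  rw [habs]
  have hnBnn : 0 ≤ nB := norm_nonneg _
  calc c * ((1 + c * a)⁻¹ * ‖γ‖)
      ≤ c * ((1 + c * a)⁻¹ * (nB * (a / ξ))) := by
        gcongr
        exact hγbound.trans (by gcongr)
    _ = nB / ξ * (c * a / (1 + c * a)) := by
        field_simp
    _ ≤ nB / ξ * 1 := by
        gcongr
        rw [div_le_one hden]
        linarith
    _ = nB / ξ := mul_one _
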